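/- (Theorem 3.2) For every u ∈ H with ‖u‖₀ = 1 and λ(u) < λ₂, the distance in the energy norm of u to its best approximation P₁u in the eigenspace E₁ satisfies ‖u − P₁u‖² ≤ (λ₂/(λ₂ − λ₁)) (λ(u) − λ₁). -/
import Mathlib


open scoped RealInnerProductSpace

/-- The Rayleigh quotient `λ(u) = a(u,u)/(u,u)`, where `a = ⟪·,·⟫` is the inner product of the
Hilbert space `H` (inducing the energy norm `‖·‖`) and `b` is the second inner product `(·,·)`
(inducing the weaker norm `‖·‖₀ = √(b u u)`). Note `⟪u,u⟫ = ‖u‖²`. -/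
noncomputable def rayleigh {H : Type*} [NormedAddCommGroup H] [InnerProductSpace ℝ H]
    (b : LinearMap.BilinForm ℝ H) (u : H) : ℝ :=
  ‖u‖ ^ 2 / b u u

/-- Theorem 3.2: `‖u − P₁u‖² ≤ (λ₂/(λ₂ − λ₁))(λ(u) − λ₁)`. -/
theorem distance_to_eigenspace_bound {H : Type*} [NormedAddCommGroup H] [InnerProductSpace ℝ H] [CompleteSpace H]
    (b : LinearMap.BilinForm ℝ H)
    (hb_symm : ∀ x y : H, b x y = b y x)
    (hb_pos : ∀ x : H, x ≠ 0 → 0 < b x x)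
    (lam1 : ℝ) (hlam1 : 0 < lam1)
    (hmin : ∀ x : H, x ≠ 0 → lam1 ≤ rayleigh b x)
    (hE1 : ∃ x : H, x ≠ 0 ∧ ∀ χ : H, ⟪ x, χ⟫ = lam1 * b x χ)
    (lam2 : ℝ) (hlam12 : lam1 < lam2)
    (hmin2 : ∀ x : H, x ≠ 0 →
      (∀ χ₁ : H, (∀ χ : H, ⟪χ₁, χ⟫ = lam1 * b χ₁ χ) → b x χ₁ = 0) →
      lam2 ≤ rayleigh b x)
    (P₁ : H →ₗ[ℝ] H)
    (hP₁mem : ∀ x : H, ∀ χ : H, ⟪P₁ x, χ⟫ = lam1 * b (P₁ x) χ)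
    (hP₁orth : ∀ x : H, ∀ χ₁ : H, (∀ χ : H, ⟪χ₁, χ⟫ = lam1 * b χ₁ χ) → b (x - P₁ x) χ₁ = 0)
    (u : H) (hu : b u u = 1) (hlt : rayleigh b u < lam2) :
    ‖u - P₁ u‖ ^ 2 ≤ lam2 / (lam2 - lam1) * (rayleigh b u - lam1) := by
  set w := u - P₁ u with hw
  have hcross : b w (P₁ u) = 0 := hP₁orth u (P₁ u) (hP₁mem u)
  have hcross' : b (P₁ u) w = 0 := by rw [hb_symm]; exact hcross
  have huw : u = P₁ u + w := by rw [hw]; abel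
  -- b-decomposition
  have hbsum : b (P₁ u) (P₁ u) + b w w = 1 := by
    have : b u u = b (P₁ u) (P₁ u) + b (P₁ u) w + (b w (P₁ u) + b w w) := by
      conv_lhs => rw [huw]
      simp only [map_add, LinearMap.add_apply]
      ring_nf
    rw [hu, hcross, hcross'] at this
    linarith
  -- a-cross term is zero
  have hacross : ⟪P₁ u, w⟫ = 0 := by rw [hP₁mem u w, hcross']; ring
  have hnormP : ‖P₁ u‖ ^ 2 = lam1 * b (P₁ u) (P₁ u) := by
    rw [← real_inner_self_eq_norm_sq]
    exact hP₁mem u (P₁ u)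
  have hnormu : ‖u‖ ^ 2 = lam1 * b (P₁ u) (P₁ u) + ‖w‖ ^ 2 := by
    have h1 : ⟪w, P₁ u⟫ = (0:ℝ) := by rw [real_inner_comm]; exact hacross
    rw [← real_inner_self_eq_norm_sq]
    conv_lhs => rw [huw]
    rw [inner_add_add_self, hacross, h1, real_inner_self_eq_norm_sq,
      real_inner_self_eq_norm_sq, hnormP]
    ring
  have hray : rayleigh b u = lam1 * b (P₁ u) (P₁ u) + ‖w‖ ^ 2 := by
    rw [rayleigh, hu, div_one, hnormu]
  by_cases hw0 : w = 0
  · have : ‖w‖ ^ 2 = 0 := by simp [hw0]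
    rw [this, hray, this]
    have hβ : b w w = 0 := by simp [hw0]
    rw [hβ] at hbsum
    have : lam1 * b (P₁ u) (P₁ u) + 0 - lam1 = 0 := by
      rw [show b (P₁ u) (P₁ u) = 1 by linarith]; ring
    rw [this, mul_zero]
  · have hβ : 0 < b w w := hb_pos w hw0
    have h2 : lam2 ≤ rayleigh b w :=
      hmin2 w hw0 (fun χ₁ hχ₁ => hP₁orth u χ₁ hχ₁)
    rw [rayleigh, le_div_iff₀ hβ] at h2
    -- rayleigh b u - lam1 = ‖w‖² - lam1 * b w w
    have hdiff : rayleigh b u - lam1 = ‖w‖ ^ 2 - lam1 * b w w := by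
      rw [hray]
      have : b (P₁ u) (P₁ u) = 1 - b w w := by linarith
      rw [this]; ring
    rw [hdiff]
    rw [div_mul_eq_mul_div, le_div_iff₀ (by linarith)]
    nlinarith [hβ, h2, hlam1, hlam12]
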